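/- Let W = ℝ^m and V = ℝ^n with n < m, and let U : ℝ^m → ℝ^n be given by U = D Q where Q ∈ ℝ^{m×m} is orthogonal and D = (I_n, 0_{n×(m-n)}) is the truncation matrix. Let S = (UᵀU)(ℝ^m) be the range of the projection P = UᵀU. Then for any vectors v, v_1, ..., v_k ∈ S and any λ > 0, we have vᵀ Uᵀ U (∑_{i=1}^k v_i v_iᵀ + λ I_m)^{-1} Uᵀ U v = (Uv)ᵀ (∑_{i=1}^k (U v_i)(U v_i)ᵀ + λ I_n)^{-1} (U v). -/

import Mathlib

open Matrix Finset

lemma aux_mul_vecMulVec {l m n : Type*} [Fintype m] (M : Matrix n m ℝ) (a : m → ℝ) (b : l → ℝ) :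
    M * vecMulVec a b = vecMulVec (M.mulVec a) b := by
  ext i j
  simp [mul_apply, vecMulVec_apply, mulVec, dotProduct, Finset.sum_mul, mul_assoc]

lemma aux_vecMulVec_mul {l m n : Type*} [Fintype m] (M : Matrix m l ℝ) (a : n → ℝ) (b : m → ℝ) :
    vecMulVec a b * M = vecMulVec a (b ᵥ* M) := by
  ext i j
  simp [mul_apply, vecMulVec_apply, vecMul, dotProduct, Finset.mul_sum, mul_assoc]

lemma aux_vecMulVec_posSemidef {n : Type*} [Fintype n] (a : n → ℝ) :
    (vecMulVec a a).PosSemidef := by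
  refine Matrix.PosSemidef.of_dotProduct_mulVec_nonneg ?_ ?_
  · ext i j; simp [vecMulVec_apply, mul_comm, conjTranspose_apply]
  · intro x
    have h1 : (vecMulVec a a).mulVec x = fun i => a i * (a ⬝ᵥ x) := by
      ext i
      simp [vecMulVec_apply, mulVec, dotProduct, Finset.mul_sum, mul_assoc]
    have h2 : (x ⬝ᵥ fun i => a i * (a ⬝ᵥ x)) = (a ⬝ᵥ x) * (a ⬝ᵥ x) := by
      simp only [dotProduct, Finset.sum_mul]
      exact Finset.sum_congr rfl fun i _ => by ring
    rw [h1]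
    show (0 : ℝ) ≤ star x ⬝ᵥ _
    simpa [h2] using mul_self_nonneg (a ⬝ᵥ x)

lemma aux_posDef {n : Type*} [Fintype n] [DecidableEq n] (k : ℕ) (vs : Fin k → n → ℝ)
    {lam : ℝ} (hlam : 0 < lam) :
    (∑ i, vecMulVec (vs i) (vs i) + lam • (1 : Matrix n n ℝ)).PosDef := by
  apply Matrix.PosDef.posSemidef_add
  · exact Finset.sum_induction _ _ (fun a b ha hb => ha.add hb) Matrix.PosSemidef.zero
      (fun i _ => aux_vecMulVec_posSemidef (vs i))
  · rw [smul_one_eq_diagonal, Matrix.posDef_diagonal_iff]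
    exact fun _ => hlam

/-- Projection trick for quadratic forms: with `U = D * Q` (`Q` orthogonal, `D` the
truncation matrix), `P = Uᵀ * U`, and vectors in the range of `P`, the quadratic form
of the regularized inverse Gram matrix can be computed in the compressed space. -/
theorem stmt0 (m n k : ℕ) (hn : n < m)
    (Q : Matrix (Fin m) (Fin m) ℝ) (hQ : Qᵀ * Q = 1)
    (D : Matrix (Fin n) (Fin m) ℝ)
    (hD : ∀ i j, D i j = if (j : ℕ) = (i : ℕ) then 1 else 0)
    (U : Matrix (Fin n) (Fin m) ℝ) (hU : U = D * Q)
    (v : Fin m → ℝ) (vs : Fin k → Fin m → ℝ)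
    (hv : ∃ w, (Uᵀ * U).mulVec w = v)
    (hvs : ∀ i, ∃ w, (Uᵀ * U).mulVec w = vs i)
    (lam : ℝ) (hlam : 0 < lam) :
    v ⬝ᵥ ((Uᵀ * U) * (∑ i, vecMulVec (vs i) (vs i) + lam • (1 : Matrix (Fin m) (Fin m) ℝ))⁻¹
        * (Uᵀ * U)).mulVec v
      = (U.mulVec v) ⬝ᵥ
        ((∑ i, vecMulVec (U.mulVec (vs i)) (U.mulVec (vs i))
            + lam • (1 : Matrix (Fin n) (Fin n) ℝ))⁻¹).mulVec (U.mulVec v) := by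
  set P : Matrix (Fin m) (Fin m) ℝ := Uᵀ * U with hP
  set A : Matrix (Fin m) (Fin m) ℝ :=
    ∑ i, vecMulVec (vs i) (vs i) + lam • (1 : Matrix (Fin m) (Fin m) ℝ) with hA
  set B : Matrix (Fin n) (Fin n) ℝ :=
    ∑ i, vecMulVec (U.mulVec (vs i)) (U.mulVec (vs i))
      + lam • (1 : Matrix (Fin n) (Fin n) ℝ) with hB
  -- U * Uᵀ = 1
  have hDDt : D * Dᵀ = 1 := by
    ext i j
    simp only [mul_apply, transpose_apply, hD, one_apply, ite_mul, one_mul, zero_mul]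
    have hcond : ∀ (i : Fin n) (kk : Fin m), ((kk : ℕ) = (i : ℕ)) ↔ (kk = Fin.castLE hn.le i) := by
      intro i kk; simp [Fin.ext_iff]
    simp only [hcond]
    rw [Finset.sum_ite_eq' Finset.univ (Fin.castLE hn.le i)]
    simp only [Finset.mem_univ, if_true]
    by_cases h : i = j
    · simp [h]
    · rw [if_neg ((Fin.castLE_injective hn.le).ne h), if_neg h]
  have hQQt : Q * Qᵀ = 1 := mul_eq_one_comm.mp hQ
  have hUUt : U * Uᵀ = 1 := by
    rw [hU, transpose_mul, Matrix.mul_assoc, ← Matrix.mul_assoc Q Qᵀ Dᵀ, hQQt,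
      Matrix.one_mul, hDDt]
  -- P is a symmetric idempotent
  have hPP : P * P = P := by
    rw [hP, Matrix.mul_assoc, ← Matrix.mul_assoc U Uᵀ U, hUUt, Matrix.one_mul]
  have hPsymm : Pᵀ = P := by rw [hP, transpose_mul, transpose_transpose]
  have hPv : P.mulVec v = v := by
    obtain ⟨w, hw⟩ := hv
    rw [← hw, mulVec_mulVec, hPP]
  have hPvs : ∀ i, P.mulVec (vs i) = vs i := by
    intro i
    obtain ⟨w, hw⟩ := hvs i
    rw [← hw, mulVec_mulVec, hPP]
  have hvecMulP : ∀ i, vs i ᵥ* P = vs i := by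
    intro i
    rw [← hPsymm, vecMul_transpose, hPvs]
  -- A commutes with P
  have hAP : A * P = P * A := by
    rw [hA, add_mul, mul_add, Finset.sum_mul, Finset.mul_sum, smul_mul_assoc, mul_smul_comm,
      one_mul, mul_one]
    congr 1
    refine Finset.sum_congr rfl fun i _ => ?_
    rw [aux_vecMulVec_mul, hvecMulP, aux_mul_vecMulVec, hPvs]
  -- intertwining relation: U * A = B * U
  have hUvecMul : ∀ i, U.mulVec (vs i) ᵥ* U = vs i := by
    intro i
    rw [← mulVec_transpose, mulVec_mulVec, ← hP, hPvs]
  have hUA : U * A = B * U := by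
    rw [hA, hB, Matrix.mul_add, Matrix.add_mul, Matrix.mul_sum, Matrix.sum_mul,
      Matrix.mul_smul, Matrix.smul_mul, Matrix.mul_one, Matrix.one_mul]
    congr 1
    refine Finset.sum_congr rfl fun i _ => ?_
    rw [aux_mul_vecMulVec, aux_vecMulVec_mul, hUvecMul]
  -- invertibility
  have hAdef : A.PosDef := aux_posDef k vs hlam
  have hBdef : B.PosDef := aux_posDef k (fun i => U.mulVec (vs i)) hlam
  have hAdet : IsUnit A.det := (Matrix.isUnit_iff_isUnit_det A).mp hAdef.isUnit
  have hBdet : IsUnit B.det := (Matrix.isUnit_iff_isUnit_det B).mp hBdef.isUnit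
  have hAAinv : A * A⁻¹ = 1 := mul_nonsing_inv A hAdet
  have hAinvA : A⁻¹ * A = 1 := nonsing_inv_mul A hAdet
  have hBinvB : B⁻¹ * B = 1 := nonsing_inv_mul B hBdet
  -- B⁻¹ * U = U * A⁻¹
  have hBU : B⁻¹ * U = U * A⁻¹ := by
    have h1 : B⁻¹ * U * (A * A⁻¹) = B⁻¹ * U := by rw [hAAinv, Matrix.mul_one]
    rw [← h1, ← Matrix.mul_assoc (B⁻¹ * U) A A⁻¹, Matrix.mul_assoc B⁻¹ U A, hUA,
      ← Matrix.mul_assoc B⁻¹ B U, hBinvB, Matrix.one_mul]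
  -- A⁻¹ commutes with P
  have hAinvP : A⁻¹ * P = P * A⁻¹ := by
    have h1 : A⁻¹ * P * (A * A⁻¹) = A⁻¹ * P := by rw [hAAinv, Matrix.mul_one]
    rw [← h1, ← Matrix.mul_assoc (A⁻¹ * P) A A⁻¹, Matrix.mul_assoc A⁻¹ P A, ← hAP,
      ← Matrix.mul_assoc A⁻¹ A P, hAinvA, Matrix.one_mul]
  -- main matrix identity
  have hkey : P * A⁻¹ * P = Uᵀ * B⁻¹ * U := by
    calc P * A⁻¹ * P = P * (A⁻¹ * P) := by rw [Matrix.mul_assoc]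
    _ = P * (P * A⁻¹) := by rw [hAinvP]
    _ = (P * P) * A⁻¹ := by rw [← Matrix.mul_assoc P P A⁻¹]
    _ = P * A⁻¹ := by rw [hPP]
    _ = Uᵀ * (U * A⁻¹) := by rw [hP, Matrix.mul_assoc]
    _ = Uᵀ * (B⁻¹ * U) := by rw [hBU]
    _ = Uᵀ * B⁻¹ * U := by rw [Matrix.mul_assoc]
  rw [hkey, ← mulVec_mulVec, ← mulVec_mulVec, dotProduct_mulVec v Uᵀ, vecMul_transpose]
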